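/- Let X and Y be pre-Riesz spaces and T: X → Y a bipositive Riesz* homomorphism. Then for all x, y ∈ X: x ⊥ y if and only if Tx ⊥ Ty. -/

import Mathlib

/-- Disjointness in a partially ordered vector space. -/
def PDisj {X : Type*} [AddCommGroup X] [PartialOrder X] (x y : X) : Prop :=
  upperBounds {x + y, -x - y} = upperBounds {x - y, -x + y}

lemma fwd_aux {X Y : Type*}
    [AddCommGroup X] [PartialOrder X] [IsOrderedAddMonoid X] [Module ℝ X]
    [AddCommGroup Y] [PartialOrder Y] [IsOrderedAddMonoid Y] [Module ℝ Y]
    (T : X →ₗ[ℝ] Y)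
    (hRiesz : ∀ M : Set X, M.Nonempty → M.Finite →
      T '' (lowerBounds (upperBounds M)) ⊆ lowerBounds (upperBounds (T '' M)))
    (v w : X)
    (h : upperBounds {v, -v} = upperBounds {w, -w}) :
    upperBounds {T v, -T v} ⊆ upperBounds {T w, -T w} := by
  have himg : T '' ({v, -v} : Set X) = {T v, -T v} := by
    rw [Set.image_pair, map_neg]
  have key : ∀ a : X, a ∈ lowerBounds (upperBounds ({v, -v} : Set X)) →
      T a ∈ lowerBounds (upperBounds ({T v, -T v} : Set Y)) := by
    intro a ha
    rw [← himg]
    exact hRiesz _ ⟨v, by simp⟩ (Set.toFinite _) ⟨a, ha, rfl⟩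
  have hw : T w ∈ lowerBounds (upperBounds ({T v, -T v} : Set Y)) := by
    apply key
    intro u hu
    rw [h] at hu
    exact hu (Set.mem_insert _ _)
  have hw' : -T w ∈ lowerBounds (upperBounds ({T v, -T v} : Set Y)) := by
    have := key (-w) (by
      intro u hu
      rw [h] at hu
      exact hu (by simp))
    rwa [map_neg] at this
  intro u hu
  rintro z (rfl | rfl)
  · exact hw hu
  · exact hw' hu

lemma bwd_aux {X Y : Type*}
    [AddCommGroup X] [PartialOrder X] [IsOrderedAddMonoid X] [Module ℝ X]
    [AddCommGroup Y] [PartialOrder Y] [IsOrderedAddMonoid Y] [Module ℝ Y]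
    (T : X →ₗ[ℝ] Y) (hbi : ∀ x : X, 0 ≤ x ↔ 0 ≤ T x)
    (v w : X)
    (h : upperBounds {T v, -T v} = upperBounds {T w, -T w}) :
    upperBounds {v, -v} ⊆ upperBounds {w, -w} := by
  intro z hz
  have h1 : v ≤ z := hz (Set.mem_insert _ _)
  have h2 : -v ≤ z := hz (by simp)
  have hTz : T z ∈ upperBounds ({T v, -T v} : Set Y) := by
    rintro u (rfl | rfl)
    · have := (hbi (z - v)).mp (sub_nonneg.mpr h1)
      rw [map_sub] at this
      exact sub_nonneg.mp this
    · have h2' : (0:X) ≤ z + v := by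
        rw [← sub_neg_eq_add]
        exact sub_nonneg.mpr h2
      have := (hbi (z + v)).mp h2'
      rw [map_add] at this
      rw [← sub_neg_eq_add] at this
      exact sub_nonneg.mp this
  rw [h] at hTz
  have hw1 : T w ≤ T z := hTz (Set.mem_insert _ _)
  have hw2 : -T w ≤ T z := hTz (by simp)
  have g1 : w ≤ z := by
    have := (hbi (z - w)).mpr (by rw [map_sub]; exact sub_nonneg.mpr hw1)
    exact sub_nonneg.mp this
  have g2 : -w ≤ z := by
    have := (hbi (z + w)).mpr (by rw [map_add, ← sub_neg_eq_add]; exact sub_nonneg.mpr hw2)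
    rw [← sub_neg_eq_add] at this
    exact sub_nonneg.mp this
  rintro u (rfl | rfl)
  · exact g1
  · exact g2

/-- A bipositive Riesz* homomorphism between pre-Riesz spaces preserves and
reflects disjointness. -/
theorem stmt12 {X Y : Type*}
    [AddCommGroup X] [PartialOrder X] [IsOrderedAddMonoid X] [Module ℝ X]
    [PosSMulStrictMono ℝ X]
    [AddCommGroup Y] [PartialOrder Y] [IsOrderedAddMonoid Y] [Module ℝ Y]
    [PosSMulStrictMono ℝ Y]
    (hprX : ∀ x y z : X, upperBounds {x + y, x + z} ⊆ upperBounds {y, z} → 0 ≤ x)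
    (hprY : ∀ x y z : Y, upperBounds {x + y, x + z} ⊆ upperBounds {y, z} → 0 ≤ x)
    (T : X →ₗ[ℝ] Y) (hbi : ∀ x : X, 0 ≤ x ↔ 0 ≤ T x)
    (hRiesz : ∀ M : Set X, M.Nonempty → M.Finite →
      T '' (lowerBounds (upperBounds M)) ⊆ lowerBounds (upperBounds (T '' M)))
    (x y : X) : PDisj x y ↔ PDisj (T x) (T y) := by
  have e1 : ({x + y, -x - y} : Set X) = {x + y, -(x + y)} := by
    rw [neg_add, sub_eq_add_neg]
  have e2 : ({x - y, -x + y} : Set X) = {x - y, -(x - y)} := by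
    rw [neg_sub, neg_add_eq_sub]
  have e3 : ({T x + T y, -T x - T y} : Set Y) = {T (x + y), -T (x + y)} := by
    rw [map_add, neg_add, sub_eq_add_neg]
  have e4 : ({T x - T y, -T x + T y} : Set Y) = {T (x - y), -T (x - y)} := by
    rw [map_sub, neg_sub, neg_add_eq_sub]
  unfold PDisj
  rw [e1, e2, e3, e4]
  constructor
  · intro h
    exact Set.Subset.antisymm (fwd_aux T hRiesz _ _ h) (fwd_aux T hRiesz _ _ h.symm)
  · intro h
    exact Set.Subset.antisymm (bwd_aux T hbi _ _ h) (bwd_aux T hbi _ _ h.symm)
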